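/- Let F be a rational function with F(0) = 1 that is the moment generating function of a real random variable, with all zeros and poles nonzero. If some zero ρ of F satisfies |ρ| < |ξ| for every pole ξ, then there exist infinitely many positive integers p for which the p-th cumulant κ_p (defined by κ_p = p!·[t^p] log F(t)) is negative. -/

import Mathlib

open MeasureTheory ProbabilityTheory Filter

section Helpers
open Finset

lemma re_hasDerivAt' {f : ℝ → ℂ} {d : ℂ} {t : ℝ} (h : HasDerivAt f d t) :
    HasDerivAt (fun s => (f s).re) d.re t := by
  exact Complex.reCLM.hasFDerivAt.comp_hasDerivAt t h

lemma iteratedDeriv_eq_of_family {U : Set ℝ} (hU : IsOpen U)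
    (H : ℕ → ℝ → ℂ) (hder : ∀ n, ∀ t ∈ U, HasDerivAt (H n) (H (n+1) t) t)
    (f : ℝ → ℝ) (hf : ∀ t ∈ U, f t = (H 0 t).re) :
    ∀ n, ∀ t ∈ U, iteratedDeriv n f t = (H n t).re := by
  intro n
  induction n with
  | zero => simpa using hf
  | succ n ih =>
    intro t ht
    rw [iteratedDeriv_succ]
    have hev : iteratedDeriv n f =ᶠ[nhds t] fun s => (H n s).re :=
      Filter.eventually_of_mem (hU.mem_nhds ht) ih
    rw [hev.deriv_eq]
    exact (re_hasDerivAt' (hder n t ht)).deriv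

lemma log_term_hasDerivAt {a : ℂ} (ha : a ≠ 0) {t : ℝ} (h : 0 < (1 - (t:ℂ)/a).re) :
    HasDerivAt (fun s : ℝ => Complex.log (1 - (s:ℂ)/a)) (((t:ℂ) - a)⁻¹) t := by
  have hne : (1 : ℂ) - (t:ℂ)/a ≠ 0 := by
    intro h0; rw [h0] at h; simp at h
  have hta : (t:ℂ) - a ≠ 0 := by
    intro h0
    apply hne
    rw [sub_eq_zero] at h0
    rw [h0, div_self ha]; ring
  have inner : HasDerivAt (fun z : ℂ => 1 - z / a) (-a⁻¹) (t:ℂ) := by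
    simpa [one_div] using ((hasDerivAt_id ((t:ℂ))).div_const a).const_sub 1
  have hslit : (1 - (t:ℂ)/a) ∈ Complex.slitPlane := Complex.mem_slitPlane_iff.2 (Or.inl h)
  have hlog := (Complex.hasDerivAt_log hslit).comp (t:ℂ) inner
  have hval : (1 - (t:ℂ)/a)⁻¹ * (-a⁻¹) = ((t:ℂ) - a)⁻¹ := by
    rw [← inv_neg, ← mul_inv]
    congr 1
    field_simp
    ring
  rw [Function.comp_def] at hlog
  rw [hval] at hlog
  exact hlog.comp_ofReal

lemma zpow_term_hasDerivAt {a : ℂ} {t : ℝ} (h : (t:ℂ) ≠ a) (m : ℤ) :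
    HasDerivAt (fun s : ℝ => ((s:ℂ) - a) ^ m) ((m : ℂ) * ((t:ℂ) - a) ^ (m - 1)) t := by
  have inner : HasDerivAt (fun z : ℂ => z - a) 1 (t:ℂ) := (hasDerivAt_id _).sub_const a
  have houter := hasDerivAt_zpow m ((t:ℂ) - a) (Or.inl (sub_ne_zero.mpr h))
  have := houter.comp (t:ℂ) inner
  rw [Function.comp_def] at this
  simpa using this.comp_ofReal

noncomputable def Hfam {r s : ℕ} (ρ : Fin r → ℂ) (ξ : Fin s → ℂ) : ℕ → ℝ → ℂ
  | 0, t => (∑ i, Complex.log (1 - (t:ℂ) / ρ i)) - ∑ j, Complex.log (1 - (t:ℂ) / ξ j)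
  | (n+1), t => ((-1)^n * (Nat.factorial n : ℂ)) *
      ((∑ i, ((t:ℂ) - ρ i) ^ (-((n:ℤ)+1))) - ∑ j, ((t:ℂ) - ξ j) ^ (-((n:ℤ)+1)))

lemma ne_of_re_pos {a : ℂ} {t : ℝ} (h : 0 < (1 - (t:ℂ)/a).re) (ha : a ≠ 0) : (t:ℂ) ≠ a := by
  intro h0
  rw [h0, div_self ha] at h
  simp at h

lemma hfam_hasDerivAt {r s : ℕ} (ρ : Fin r → ℂ) (ξ : Fin s → ℂ)
    (hρ : ∀ i, ρ i ≠ 0) (hξ : ∀ j, ξ j ≠ 0) (t : ℝ)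
    (h1 : ∀ i, 0 < (1 - (t:ℂ)/ρ i).re) (h2 : ∀ j, 0 < (1 - (t:ℂ)/ξ j).re) :
    ∀ n, HasDerivAt (Hfam ρ ξ n) (Hfam ρ ξ (n+1) t) t := by
  have hρt : ∀ i, (t:ℂ) ≠ ρ i := fun i => ne_of_re_pos (h1 i) (hρ i)
  have hξt : ∀ j, (t:ℂ) ≠ ξ j := fun j => ne_of_re_pos (h2 j) (hξ j)
  intro n
  match n with
  | 0 =>
    have hsum1 : HasDerivAt (fun u : ℝ => ∑ i, Complex.log (1 - (u:ℂ) / ρ i))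
        (∑ i, ((t:ℂ) - ρ i)⁻¹) t :=
      HasDerivAt.fun_sum fun i _ => log_term_hasDerivAt (hρ i) (h1 i)
    have hsum2 : HasDerivAt (fun u : ℝ => ∑ j, Complex.log (1 - (u:ℂ) / ξ j))
        (∑ j, ((t:ℂ) - ξ j)⁻¹) t :=
      HasDerivAt.fun_sum fun j _ => log_term_hasDerivAt (hξ j) (h2 j)
    have := hsum1.sub hsum2
    refine this.congr_deriv (Eq.symm ?_)
    show ((-1:ℂ)^0 * (Nat.factorial 0 : ℂ)) * _ = _
    simp [zpow_neg, zpow_one]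
  | (m+1) =>
    have hsum1 : HasDerivAt (fun u : ℝ => ∑ i, ((u:ℂ) - ρ i) ^ (-((m:ℤ)+1)))
        (∑ i, ((-((m:ℤ)+1) : ℂ) * ((t:ℂ) - ρ i) ^ (-((m:ℤ)+1) - 1))) t :=
      HasDerivAt.fun_sum fun i _ => by
        simpa using zpow_term_hasDerivAt (hρt i) (-((m:ℤ)+1))
    have hsum2 : HasDerivAt (fun u : ℝ => ∑ j, ((u:ℂ) - ξ j) ^ (-((m:ℤ)+1)))
        (∑ j, ((-((m:ℤ)+1) : ℂ) * ((t:ℂ) - ξ j) ^ (-((m:ℤ)+1) - 1))) t :=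
      HasDerivAt.fun_sum fun j _ => by
        simpa using zpow_term_hasDerivAt (hξt j) (-((m:ℤ)+1))
    have h := (hsum1.sub hsum2).const_mul ((-1:ℂ)^m * (Nat.factorial m : ℂ))
    have he : (-((m:ℤ)+1) - 1 : ℤ) = -(((m+1:ℕ):ℤ)+1) := by push_cast; ring
    refine h.congr_deriv (Eq.symm ?_)
    show ((-1:ℂ)^(m+1) * (Nat.factorial (m+1) : ℂ)) * _ = _
    rw [← Finset.mul_sum, ← Finset.mul_sum, ← mul_sub, he]
    rw [show ((-1:ℂ)^(m+1) * (Nat.factorial (m+1) : ℂ)) = ((-1:ℂ)^m * (Nat.factorial m : ℂ)) * (-((m:ℂ)+1)) by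
      rw [pow_succ, Nat.factorial_succ]; push_cast; ring]
    push_cast
    ring

lemma hfam_eval_zero {r s : ℕ} (ρ : Fin r → ℂ) (ξ : Fin s → ℂ) (n : ℕ) :
    Hfam ρ ξ (n+1) 0 = (Nat.factorial n : ℂ) *
      ((∑ j, ((ξ j)^(n+1))⁻¹) - ∑ i, ((ρ i)^(n+1))⁻¹) := by
  have key : ∀ a : ℂ, (((0:ℝ):ℂ) - a) ^ (-((n:ℤ)+1)) = (-1)^(n+1) * (a ^ (n+1))⁻¹ := by
    intro a
    rw [Complex.ofReal_zero, zero_sub,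
      show (-((n:ℤ)+1)) = -(((n+1:ℕ)):ℤ) by push_cast; ring,
      zpow_neg, zpow_natCast, neg_pow, mul_inv]
    congr 1
    rw [← inv_pow, inv_neg, inv_one]
  show ((-1)^n * (Nat.factorial n : ℂ)) * _ = _
  simp only [key]
  rw [← Finset.mul_sum, ← Finset.mul_sum, ← mul_sub]
  have hodd : ((-1:ℂ))^n * (-1)^(n+1) = -1 := by
    rw [← pow_add]
    exact Odd.neg_one_pow ⟨n, by ring⟩
  calc ((-1)^n * (Nat.factorial n : ℂ)) * ((-1)^(n+1) * ((∑ i, ((ρ i)^(n+1))⁻¹) - ∑ j, ((ξ j)^(n+1))⁻¹))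
      = ((-1:ℂ)^n * (-1)^(n+1)) * (Nat.factorial n : ℂ) * ((∑ i, ((ρ i)^(n+1))⁻¹) - ∑ j, ((ξ j)^(n+1))⁻¹) := by ring
    _ = _ := by rw [hodd]; ring

lemma strictMono_add_le {φ : ℕ → ℕ} (hφ : StrictMono φ) (M k : ℕ) : φ M + k ≤ φ (M + k) := by
  induction k with
  | zero => simp
  | succ k ih =>
    have := hφ (show M + k < M + (k+1) by omega)
    omega

lemma exists_pow_near_one {k : ℕ} (v : Fin k → ℂ) (hv : ∀ i, ‖v i‖ = 1)
    {ε : ℝ} (hε : 0 < ε) (N : ℕ) :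
    ∃ p : ℕ, N ≤ p ∧ 1 ≤ p ∧ ∀ i, ‖v i ^ p - 1‖ < ε := by
  set u : ℕ → (Fin k → ℂ) := fun n i => v i ^ n with hu
  have hmem : ∀ n, u n ∈ Metric.closedBall (0 : Fin k → ℂ) 1 := by
    intro n
    rw [Metric.mem_closedBall, dist_zero_right]
    refine (pi_norm_le_iff_of_nonneg zero_le_one).2 fun i => ?_
    simp [u, norm_pow, hv i]
  obtain ⟨a, -, φ, hφ, hconv⟩ :=
    (isCompact_closedBall (0 : Fin k → ℂ) 1).tendsto_subseq hmem
  rw [Metric.tendsto_atTop] at hconv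
  obtain ⟨M, hM⟩ := hconv (ε/2) (by positivity)
  set N' := max N 1 with hN'
  have hle : φ M + N' ≤ φ (M + N') := strictMono_add_le hφ M N'
  set d := φ (M + N') - φ M with hd
  have hdN : N' ≤ d := by omega
  have hsplit : φ (M + N') = φ M + d := by omega
  refine ⟨d, le_trans (le_max_left _ _) hdN, le_trans (le_max_right _ _) hdN, fun i => ?_⟩
  have h1 : dist (u (φ M)) a < ε/2 := hM M le_rfl
  have h2 : dist (u (φ (M + N'))) a < ε/2 := hM (M + N') (by omega)
  have hdist : dist (u (φ (M + N'))) (u (φ M)) < ε :=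
    calc dist (u (φ (M + N'))) (u (φ M)) ≤ dist (u (φ (M + N'))) a + dist a (u (φ M)) :=
          dist_triangle _ _ _
      _ < ε/2 + ε/2 := by rw [dist_comm a]; exact add_lt_add h2 h1
      _ = ε := by ring
  have hcoord : dist (u (φ (M + N')) i) (u (φ M) i) < ε :=
    lt_of_le_of_lt (dist_le_pi_dist _ _ i) hdist
  rw [Complex.dist_eq] at hcoord
  have heq : u (φ (M + N')) i - u (φ M) i = v i ^ (φ M) * (v i ^ d - 1) := by
    simp only [u, hsplit, pow_add]
    ring
  rw [heq, norm_mul, norm_pow, hv i, one_pow, one_mul] at hcoord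
  exact hcoord

end Helpers

/-- If the moment generating function of a real random variable is a rational function
`F = ∏ᵢ(1-t/ρᵢ)/∏ⱼ(1-t/ξⱼ)` (so `F(0)=1`, zeros `ρᵢ`, poles `ξⱼ`, all nonzero) and some
zero `ρ` satisfies `|ρ| < |ξ|` for every pole `ξ`, then infinitely many cumulants of the
random variable are negative. -/
theorem infinitely_many_negative_cumulants
    {Ω : Type*} [MeasurableSpace Ω] {μ : Measure Ω} [IsProbabilityMeasure μ]
    (X : Ω → ℝ)
    (r s : ℕ) (ρ : Fin r → ℂ) (ξ : Fin s → ℂ)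
    (hρ : ∀ i, ρ i ≠ 0) (hξ : ∀ j, ξ j ≠ 0)
    (hF : ∀ᶠ t in nhds (0 : ℝ),
      (mgf X μ t : ℂ) * ∏ j, (1 - (t : ℂ) / ξ j) = ∏ i, (1 - (t : ℂ) / ρ i))
    (hzero : ∃ i, ∀ j, ‖ρ i‖ < ‖ξ j‖) :
    {p : ℕ | 1 ≤ p ∧ iteratedDeriv p (cgf X μ) 0 < 0}.Infinite := by
  classical
  obtain ⟨i0, hi0⟩ := hzero
  -- positivity of real parts eventually
  have hre : ∀ a : ℂ, a ≠ 0 → ∀ᶠ t : ℝ in nhds 0, 0 < (1 - (t:ℂ)/a).re := by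
    intro a ha
    have hc : Continuous fun t : ℝ => (1 - (t:ℂ)/a).re := by fun_prop
    have := hc.tendsto 0
    rw [show (1 - (((0:ℝ)):ℂ)/a).re = 1 by simp] at this
    exact this.eventually (eventually_gt_nhds one_pos)
  have hev : ∀ᶠ t : ℝ in nhds 0,
      ((mgf X μ t : ℂ) * ∏ j, (1 - (t:ℂ)/ξ j) = ∏ i, (1 - (t:ℂ)/ρ i)) ∧
      (∀ i, 0 < (1 - (t:ℂ)/ρ i).re) ∧ (∀ j, 0 < (1 - (t:ℂ)/ξ j).re) := by
    refine hF.and (Filter.Eventually.and ?_ ?_)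
    · exact Filter.eventually_all.2 fun i => hre (ρ i) (hρ i)
    · exact Filter.eventually_all.2 fun j => hre (ξ j) (hξ j)
  rw [eventually_nhds_iff] at hev
  obtain ⟨U, hP, hUopen, hU0⟩ := hev
  -- cgf equals (Hfam 0).re on U
  have hf0 : ∀ t ∈ U, cgf X μ t = (Hfam ρ ξ 0 t).re := by
    intro t ht
    obtain ⟨heq, h1, h2⟩ := hP t ht
    have hne1 : ∀ i, (1 : ℂ) - (t:ℂ)/ρ i ≠ 0 := by
      intro i h0; have := h1 i; rw [h0] at this; simp at this
    have hne2 : ∀ j, (1 : ℂ) - (t:ℂ)/ξ j ≠ 0 := by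
      intro j h0; have := h2 j; rw [h0] at this; simp at this
    have hQ : (∏ j, (1 - (t:ℂ)/ξ j)) ≠ 0 := Finset.prod_ne_zero_iff.2 fun j _ => hne2 j
    have hexp : Complex.exp (Hfam ρ ξ 0 t) =
        (∏ i, (1 - (t:ℂ)/ρ i)) / ∏ j, (1 - (t:ℂ)/ξ j) := by
      show Complex.exp ((∑ i, Complex.log (1 - (t:ℂ) / ρ i))
          - ∑ j, Complex.log (1 - (t:ℂ) / ξ j)) = _
      rw [Complex.exp_sub, Complex.exp_sum, Complex.exp_sum]
      congr 1
      · exact Finset.prod_congr rfl fun i _ => Complex.exp_log (hne1 i)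
      · exact Finset.prod_congr rfl fun j _ => Complex.exp_log (hne2 j)
    have hmgf : (mgf X μ t : ℂ) = Complex.exp (Hfam ρ ξ 0 t) := by
      rw [hexp, eq_div_iff hQ, heq]
    have habs : mgf X μ t = Real.exp ((Hfam ρ ξ 0 t).re) := by
      have := congrArg (‖·‖) hmgf
      rwa [Complex.norm_real, Real.norm_eq_abs, abs_of_nonneg mgf_nonneg, Complex.norm_exp] at this
    rw [ProbabilityTheory.cgf, habs, Real.log_exp]
  have hiter := iteratedDeriv_eq_of_family hUopen (Hfam ρ ξ)
    (fun n t ht => hfam_hasDerivAt ρ ξ hρ hξ t (hP t ht).2.1 (hP t ht).2.2 n)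
    (cgf X μ) hf0
  -- cumulant formula
  have hκ : ∀ n : ℕ, iteratedDeriv (n+1) (cgf X μ) 0 =
      (Nat.factorial n : ℝ) *
        ((∑ j, (((ξ j)^(n+1))⁻¹).re) - ∑ i, (((ρ i)^(n+1))⁻¹).re) := by
    intro n
    rw [hiter (n+1) 0 hU0, hfam_eval_zero,
      show (Nat.factorial n : ℂ) = ((Nat.factorial n : ℝ) : ℂ) by push_cast; rfl,
      Complex.re_ofReal_mul, Complex.sub_re, Complex.re_sum, Complex.re_sum]
  -- setup for estimates
  set m : ℝ := ‖ρ i0‖ with hm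
  have hm0 : 0 < m := norm_pos_iff.mpr (hρ i0)
  set v : Fin r → ℂ := fun i => ρ i / ((‖ρ i‖ : ℝ) : ℂ) with hv
  have hA0 : ∀ i, (0:ℝ) < ‖ρ i‖ := fun i => norm_pos_iff.mpr (hρ i)
  have hvabs : ∀ i, ‖v i‖ = 1 := by
    intro i
    rw [hv]
    simp only [norm_div, Complex.norm_real, Real.norm_eq_abs, abs_of_pos (hA0 i)]
    exact div_self (ne_of_gt (hA0 i))
  -- tail bound
  have htail : ∀ᶠ p : ℕ in atTop, ∑ j, (m / ‖ξ j‖)^p < 1/2 := by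
    have ht : Tendsto (fun p : ℕ => ∑ j, (m / ‖ξ j‖)^p) atTop (nhds 0) := by
      have := tendsto_finset_sum (Finset.univ : Finset (Fin s))
        (fun j _ => tendsto_pow_atTop_nhds_zero_of_lt_one
          (le_of_lt (div_pos hm0 (lt_trans hm0 (hi0 j))))
          ((div_lt_one (lt_trans hm0 (hi0 j))).2 (hi0 j)))
      simpa using this
    exact ht.eventually (eventually_lt_nhds (by norm_num : (0:ℝ) < 1/2))
  obtain ⟨P0, hP0⟩ := Filter.eventually_atTop.1 htail
  -- infinitude
  apply Set.infinite_of_not_bddAbove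
  rintro ⟨b, hb⟩
  obtain ⟨p, hpN, hp1, hpv⟩ := exists_pow_near_one v hvabs
    (show (0:ℝ) < 1/2 by norm_num) (max P0 (b+1))
  have hpP0 : P0 ≤ p := le_trans (le_max_left _ _) hpN
  have hpb : b + 1 ≤ p := le_trans (le_max_right _ _) hpN
  -- show p is in the set
  have hmempty : p ∈ {p : ℕ | 1 ≤ p ∧ iteratedDeriv p (cgf X μ) 0 < 0} := by
    refine ⟨hp1, ?_⟩
    obtain ⟨n, rfl⟩ : ∃ n, p = n + 1 := ⟨p - 1, by omega⟩
    rw [hκ n]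
    apply mul_neg_of_pos_of_neg
    · exact_mod_cast Nat.factorial_pos n
    rw [sub_neg]
    set q := n + 1 with hq
    have hmp0 : (0:ℝ) < m ^ q := pow_pos hm0 q
    -- lower bound for rho terms
    have hlow : ∀ i, (1/2) * ((‖ρ i‖)^q)⁻¹ ≤ (((ρ i)^q)⁻¹).re := by
      intro i
      set A : ℝ := ‖ρ i‖ with hA
      have hA0' : (0:ℝ) < A := hA0 i
      have hAq : (0:ℝ) < A ^ q := pow_pos hA0' q
      have hρeq : ρ i = ((A:ℝ):ℂ) * v i := by
        rw [hv]
        rw [mul_div_cancel₀ _ (Complex.ofReal_ne_zero.2 (ne_of_gt hA0'))]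
      have hvre : (1/2 : ℝ) ≤ (v i ^ q).re := by
        have h1 : ‖v i ^ q - 1‖ < 1/2 := hpv i
        have h2 : (1 - v i ^ q).re ≤ ‖v i ^ q - 1‖ := by
          rw [norm_sub_rev]
          exact Complex.re_le_norm _
        have : (1 - v i ^ q).re = 1 - (v i ^ q).re := by simp
        linarith
      have hnormSq : Complex.normSq ((ρ i)^q) = (A^q)^2 := by
        rw [Complex.normSq_eq_norm_sq, norm_pow]
      have hre' : ((ρ i)^q).re = A^q * (v i ^ q).re := by
        rw [hρeq, mul_pow, ← Complex.ofReal_pow, Complex.re_ofReal_mul]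
      rw [Complex.inv_re, hnormSq, hre']
      rw [show A^q * (v i ^ q).re / (A^q)^2 = (v i ^ q).re * (A^q)⁻¹ by
        field_simp]
      rw [mul_comm (1/2 : ℝ)]
      rw [mul_comm ((v i ^ q).re)]
      exact mul_le_mul_of_nonneg_left hvre (le_of_lt (inv_pos.2 hAq))
    have hlow0 : ∀ i, (0:ℝ) ≤ (((ρ i)^q)⁻¹).re := fun i =>
      le_trans (by positivity) (hlow i)
    -- upper bound for xi terms
    have hupper : ∑ j, (((ξ j)^q)⁻¹).re < (1/2) * (m^q)⁻¹ := by
      have h1 : ∀ j, (((ξ j)^q)⁻¹).re ≤ (m^q)⁻¹ * (m / ‖ξ j‖)^q := by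
        intro j
        have hBj : (0:ℝ) < ‖ξ j‖ := norm_pos_iff.mpr (hξ j)
        have : (((ξ j)^q)⁻¹).re ≤ ‖((ξ j)^q)⁻¹‖ := Complex.re_le_norm _
        rw [norm_inv, norm_pow] at this
        refine le_trans this (le_of_eq ?_)
        rw [div_pow]
        field_simp
      calc ∑ j, (((ξ j)^q)⁻¹).re ≤ ∑ j, (m^q)⁻¹ * (m / ‖ξ j‖)^q :=
            Finset.sum_le_sum fun j _ => h1 j
        _ = (m^q)⁻¹ * ∑ j, (m / ‖ξ j‖)^q := by rw [Finset.mul_sum]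
        _ < (m^q)⁻¹ * (1/2) := by
            exact mul_lt_mul_of_pos_left (hP0 q hpP0) (inv_pos.2 hmp0)
        _ = (1/2) * (m^q)⁻¹ := by ring
    have hlower : (1/2) * (m^q)⁻¹ ≤ ∑ i, (((ρ i)^q)⁻¹).re := by
      refine le_trans ?_ (Finset.single_le_sum (fun i _ => hlow0 i) (Finset.mem_univ i0))
      have := hlow i0
      rw [← hm] at this
      exact this
    exact lt_of_lt_of_le hupper hlower
  have := hb hmempty
  omega
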